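/- arXiv:2307.01790 — 3 statements merged into one kernel-verified Lean document; each statement's English description precedes it below -/
import Mathlib

section
/- Let A be an n×n and B an m×m complex positive semidefinite matrix, and let f : ℝ → ℝ be a continuous function satisfying f(s·t) = f(s)·f(t) for all s, t ≥ 0 and f(0) = 0. Then applying the continuous functional calculus gives cfc f (A ⊗ₖ B) = (cfc f A) ⊗ₖ (cfc f B). -/
open Matrix Kronecker ComplexOrder

/-- The `r`-th power of a complex square matrix, obtained via the (real) continuous
functional calculus applied to `t ↦ t ^ r` (real `rpow`, so that `0 ^ r = 0` for `r ≠ 0`). -/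
noncomputable def matRpow {k : Type*} [Fintype k] [DecidableEq k]
    (A : Matrix k k ℂ) (r : ℝ) : Matrix k k ℂ :=
  cfc (fun x : ℝ => x ^ r) A

/-- The absolute value `|A| := (Aᴴ · A)^{1/2}` of a complex square matrix, where the square
root is taken via the continuous functional calculus. -/
noncomputable def matAbs {k : Type*} [Fintype k] [DecidableEq k]
    (A : Matrix k k ℂ) : Matrix k k ℂ :=
  matRpow (Aᴴ * A) (1 / 2 : ℝ)

open Topology

namespace CfcKroneckerAux

variable {p : Type*} [Fintype p] [DecidableEq p]

/-- Conjugation of a real diagonal matrix by a unitary. -/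
noncomputable def conjDiag (U : unitary (Matrix p p ℂ)) (v : p → ℝ) : Matrix p p ℂ :=
  (U : Matrix p p ℂ) * diagonal (RCLike.ofReal ∘ v) * star (U : Matrix p p ℂ)

lemma spectrum_conjDiag (U : unitary (Matrix p p ℂ)) (v : p → ℝ) :
    spectrum ℝ (conjDiag U v) = Set.range v := by
  ext x
  conv_lhs => rw [conjDiag, Unitary.spectrum_star_right_conjugate,
    ← spectrum.algebraMap_mem_iff ℂ, spectrum_diagonal, RCLike.algebraMap_eq_ofReal]
  simp

lemma mem_spectrum_conjDiag (U : unitary (Matrix p p ℂ)) (v : p → ℝ) (i : p) :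
    v i ∈ spectrum ℝ (conjDiag U v) := by
  rw [spectrum_conjDiag]; exact ⟨i, rfl⟩

lemma key (U : unitary (Matrix p p ℂ)) (M : Matrix p p ℂ) :
    star (U : Matrix p p ℂ) * ((U : Matrix p p ℂ) * M * star (U : Matrix p p ℂ))
      * (U : Matrix p p ℂ) = M := by
  simp only [mul_assoc]
  rw [Unitary.star_mul_self_of_mem U.2, mul_one, ← mul_assoc,
    Unitary.star_mul_self_of_mem U.2, one_mul]

/-- Analogue of `Matrix.IsHermitian.cfcAux` for `conjDiag`. -/
@[simps]
noncomputable def cfcAux' (U : unitary (Matrix p p ℂ)) (v : p → ℝ) :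
    C(spectrum ℝ (conjDiag U v), ℝ) →⋆ₐ[ℝ] (Matrix p p ℂ) where
  toFun := fun g => (U : Matrix p p ℂ) *
    diagonal (RCLike.ofReal ∘ g ∘ (fun i ↦ ⟨v i, mem_spectrum_conjDiag U v i⟩))
    * star (U : Matrix p p ℂ)
  map_one' := by simp [Pi.one_def (M := fun _ : p ↦ ℂ)]
  map_mul' f g := by
    have {a b c d e f : Matrix p p ℂ} : (a * b * c) * (d * e * f) = a * (b * (c * d) * e) * f := by
      simp only [mul_assoc]
    simp only [this, ContinuousMap.coe_mul, SetLike.coe_mem, Unitary.star_mul_self_of_mem, mul_one,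
      diagonal_mul_diagonal, Function.comp_apply]
    congr! with i
    simp
  map_zero' := by simp [Pi.zero_def (M := fun _ : p ↦ ℂ)]
  map_add' f g := by
    simp only [ContinuousMap.coe_add, ← add_mul, ← mul_add, diagonal_add, Function.comp_apply]
    congr! with i
    simp
  commutes' r := by
    simp only [Function.comp_def, algebraMap_apply, smul_eq_mul, mul_one]
    rw [← mul_one (algebraMap _ _ _), ← Unitary.coe_mul_star_self U,
      ← Algebra.left_comm, Unitary.coe_star, mul_assoc]
    congr!
  map_star' f := by
    simp only [star_trivial, StarMul.star_mul, star_star, star_eq_conjTranspose (diagonal _),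
      diagonal_conjTranspose, mul_assoc]
    congr!
    ext
    simp

lemma isClosedEmbedding_cfcAux' (U : unitary (Matrix p p ℂ)) (v : p → ℝ) :
    IsClosedEmbedding (cfcAux' U v) := by
  have h0 : FiniteDimensional ℝ C(spectrum ℝ (conjDiag U v), ℝ) :=
    FiniteDimensional.of_injective (ContinuousMap.coeFnLinearMap ℝ (M := ℝ)) DFunLike.coe_injective
  refine LinearMap.isClosedEmbedding_of_injective (𝕜 := ℝ)
    (E := C(spectrum ℝ (conjDiag U v), ℝ))
    (F := Matrix p p ℂ) (f := cfcAux' U v) <| LinearMap.ker_eq_bot'.mpr fun f hf ↦ ?_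
  have hf' : (U : Matrix p p ℂ) *
      diagonal (RCLike.ofReal ∘ f ∘ fun i ↦ (⟨v i, mem_spectrum_conjDiag U v i⟩ :
        spectrum ℝ (conjDiag U v))) * star (U : Matrix p p ℂ) = 0 := hf
  have h2 :
      diagonal (RCLike.ofReal ∘ f ∘ fun i ↦ (⟨v i, mem_spectrum_conjDiag U v i⟩ :
        spectrum ℝ (conjDiag U v))) = (0 : Matrix p p ℂ) := by
    rw [← key U (diagonal _), hf', mul_zero, zero_mul]
  ext x
  simp only [ContinuousMap.zero_apply]
  obtain ⟨x, hx⟩ := x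
  obtain ⟨i, rfl⟩ := spectrum_conjDiag U v ▸ hx
  rw [← diagonal_zero] at h2
  have := (diagonal_eq_diagonal_iff).mp h2
  exact RCLike.ofReal_eq_zero.mp (this i)

lemma cfcAux'_id (U : unitary (Matrix p p ℂ)) (v : p → ℝ) :
    cfcAux' U v (.restrict (spectrum ℝ (conjDiag U v)) (.id ℝ)) = conjDiag U v := by
  unfold conjDiag
  congr!

lemma isSelfAdjoint_conjDiag (U : unitary (Matrix p p ℂ)) (v : p → ℝ) :
    IsSelfAdjoint (conjDiag U v) := by
  have hD : star (diagonal (RCLike.ofReal ∘ v) : Matrix p p ℂ) = diagonal (RCLike.ofReal ∘ v) := by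
    rw [star_eq_conjTranspose, diagonal_conjTranspose]
    congr!
    ext i
    simp [Pi.star_def, Function.comp_def]
  rw [isSelfAdjoint_iff]
  unfold conjDiag
  rw [StarMul.star_mul, StarMul.star_mul, star_star, hD, mul_assoc]

/-- The key lemma: the continuous functional calculus applied to a unitary conjugate of a
real diagonal matrix. -/
lemma cfc_conjDiag (U : unitary (Matrix p p ℂ)) (v : p → ℝ) (f : ℝ → ℝ) (hf : Continuous f) :
    cfc f (conjDiag U v) = conjDiag U (f ∘ v) := by
  have hsa : IsSelfAdjoint (conjDiag U v) := isSelfAdjoint_conjDiag U v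
  have := cfcHom_eq_of_continuous_of_map_id hsa (cfcAux' U v)
    (isClosedEmbedding_cfcAux' U v).continuous (cfcAux'_id U v)
  rw [cfc_apply f (conjDiag U v) hsa hf.continuousOn, this]
  simp only [cfcAux'_apply, ContinuousMap.coe_mk]
  unfold conjDiag
  congr!

end CfcKroneckerAux

open CfcKroneckerAux

lemma conjTranspose_kronecker {n m : Type*} (A : Matrix n n ℂ) (B : Matrix m m ℂ) :
    (A ⊗ₖ B)ᴴ = Aᴴ ⊗ₖ Bᴴ := by
  ext i j
  simp [conjTranspose_apply, kroneckerMap_apply, mul_comm]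

/-- The Kronecker product of unitary matrices is unitary. -/
lemma kronecker_mem_unitary {n m : Type*} [Fintype n] [Fintype m] [DecidableEq n] [DecidableEq m]
    (U : Matrix n n ℂ) (V : Matrix m m ℂ) (hU : U ∈ unitary (Matrix n n ℂ))
    (hV : V ∈ unitary (Matrix m m ℂ)) : U ⊗ₖ V ∈ unitary (Matrix (n × m) (n × m) ℂ) := by
  rw [Unitary.mem_iff] at hU hV ⊢
  constructor
  · rw [star_eq_conjTranspose, conjTranspose_kronecker, ← mul_kronecker_mul,
      ← star_eq_conjTranspose, ← star_eq_conjTranspose, hU.1, hV.1, one_kronecker_one]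
  · rw [star_eq_conjTranspose, conjTranspose_kronecker, ← mul_kronecker_mul,
      ← star_eq_conjTranspose, ← star_eq_conjTranspose, hU.2, hV.2, one_kronecker_one]

/-- If `A`, `B` are positive semidefinite complex matrices and `f : ℝ → ℝ` is a continuous
function that is multiplicative on nonnegative reals with `f 0 = 0`, then
`cfc f (A ⊗ₖ B) = (cfc f A) ⊗ₖ (cfc f B)`. -/
theorem cfc_kronecker_of_multiplicative {n m : ℕ}
    (A : Matrix (Fin n) (Fin n) ℂ) (B : Matrix (Fin m) (Fin m) ℂ)
    (hA : A.PosSemidef) (hB : B.PosSemidef) (f : ℝ → ℝ) (hf : Continuous f)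
    (hmul : ∀ s t : ℝ, 0 ≤ s → 0 ≤ t → f (s * t) = f s * f t) (hf0 : f 0 = 0) :
    cfc f (A ⊗ₖ B) = (cfc f A) ⊗ₖ (cfc f B) := by
  have hAh := hA.1
  have hBh := hB.1
  set U := hAh.eigenvectorUnitary with hU
  set V := hBh.eigenvectorUnitary with hV
  set d := hAh.eigenvalues
  set e := hBh.eigenvalues
  have hd : ∀ i, 0 ≤ d i := fun i => hA.eigenvalues_nonneg i
  have he : ∀ j, 0 ≤ e j := fun j => hB.eigenvalues_nonneg j
  set W : unitary (Matrix (Fin n × Fin m) (Fin n × Fin m) ℂ) :=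
    ⟨(U : Matrix (Fin n) (Fin n) ℂ) ⊗ₖ (V : Matrix (Fin m) (Fin m) ℂ),
      kronecker_mem_unitary _ _ U.2 V.2⟩ with hW
  have hWc : (W : Matrix (Fin n × Fin m) (Fin n × Fin m) ℂ)
      = (U : Matrix (Fin n) (Fin n) ℂ) ⊗ₖ (V : Matrix (Fin m) (Fin m) ℂ) := rfl
  have hstar : star (W : Matrix (Fin n × Fin m) (Fin n × Fin m) ℂ)
      = star (U : Matrix (Fin n) (Fin n) ℂ) ⊗ₖ star (V : Matrix (Fin m) (Fin m) ℂ) := by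
    rw [hWc, star_eq_conjTranspose, conjTranspose_kronecker, star_eq_conjTranspose,
      star_eq_conjTranspose]
  have hAe : A = conjDiag U d := hAh.spectral_theorem
  have hBe : B = conjDiag V e := hBh.spectral_theorem
  have hdiag1 : diagonal (RCLike.ofReal ∘ d) ⊗ₖ diagonal (RCLike.ofReal ∘ e)
      = diagonal ((RCLike.ofReal : ℝ → ℂ) ∘ fun ij : Fin n × Fin m => d ij.1 * e ij.2) := by
    have h : (fun mn : Fin n × Fin m => ((RCLike.ofReal : ℝ → ℂ) ∘ d) mn.1 * ((RCLike.ofReal : ℝ → ℂ) ∘ e) mn.2)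
        = ((RCLike.ofReal : ℝ → ℂ) ∘ fun ij : Fin n × Fin m => d ij.1 * e ij.2) := by
      funext ij
      simp [Function.comp_def, RCLike.ofReal_mul]
    rw [diagonal_kronecker_diagonal, h]
  have hdiag2 : diagonal (RCLike.ofReal ∘ (f ∘ d)) ⊗ₖ diagonal (RCLike.ofReal ∘ (f ∘ e))
      = diagonal ((RCLike.ofReal : ℝ → ℂ) ∘ (f ∘ fun ij : Fin n × Fin m => d ij.1 * e ij.2)) := by
    have h : (fun mn : Fin n × Fin m =>
          ((RCLike.ofReal : ℝ → ℂ) ∘ (f ∘ d)) mn.1 * ((RCLike.ofReal : ℝ → ℂ) ∘ (f ∘ e)) mn.2)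
        = ((RCLike.ofReal : ℝ → ℂ) ∘ (f ∘ fun ij : Fin n × Fin m => d ij.1 * e ij.2)) := by
      funext ij
      simp only [Function.comp_apply]
      rw [hmul _ _ (hd ij.1) (he ij.2), RCLike.ofReal_mul]
    rw [diagonal_kronecker_diagonal, h]
  have hABe : A ⊗ₖ B = conjDiag W (fun ij => d ij.1 * e ij.2) := by
    rw [hAe, hBe]
    unfold conjDiag
    rw [mul_kronecker_mul, mul_kronecker_mul, hdiag1, hWc, hstar]
  rw [hABe, cfc_conjDiag W _ f hf, hAe, hBe, cfc_conjDiag U d f hf, cfc_conjDiag V e f hf]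
  unfold conjDiag
  rw [mul_kronecker_mul, mul_kronecker_mul, hdiag2, hWc, hstar]
end

section
/- Let ρ₁, σ₁ be n×n and ρ₂, σ₂ be m×m complex positive semidefinite matrices, let 0 < α < 1 and z > 0. Then trace[(((σ₁ ⊗ₖ σ₂)^{(1−α)/(2z)}) · ((ρ₁ ⊗ₖ ρ₂)^{α/z}) · ((σ₁ ⊗ₖ σ₂)^{(1−α)/(2z)}))^z] = trace[((σ₁^{(1−α)/(2z)}) · (ρ₁^{α/z}) · (σ₁^{(1−α)/(2z)}))^z] · trace[((σ₂^{(1−α)/(2z)}) · (ρ₂^{α/z}) · (σ₂^{(1−α)/(2z)}))^z]. -/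
open Matrix Kronecker ComplexOrder

namespace RenyiAux

variable {k l : Type*} [Fintype k] [DecidableEq k] [Fintype l] [DecidableEq l]

/-- Conjugation by a unitary matrix as a star algebra homomorphism. -/
noncomputable def conjHom (U : Matrix k k ℂ) (h1 : star U * U = 1) (h2 : U * star U = 1) :
    Matrix k k ℂ →⋆ₐ[ℂ] Matrix k k ℂ where
  toFun x := U * x * star U
  map_one' := by simpa using h2
  map_mul' x y := by
    simp only [mul_assoc]
    rw [← mul_assoc (star U) U, h1, one_mul]
  map_zero' := by simp
  map_add' x y := by noncomm_ring
  commutes' r := by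
    simp only [Algebra.algebraMap_eq_smul_one, mul_smul_comm, smul_mul_assoc, mul_one, h2]
  map_star' x := by simp only [StarMul.star_mul, star_star, mul_assoc]

lemma conjHom_continuous (U : Matrix k k ℂ) (h1 : star U * U = 1) (h2 : U * star U = 1) :
    Continuous (conjHom U h1 h2) :=
  (continuous_const.matrix_mul continuous_id).matrix_mul continuous_const

lemma cfc_unitary_conj (f : ℝ → ℝ) (hf : Continuous f) (U A : Matrix k k ℂ)
    (h1 : star U * U = 1) (h2 : U * star U = 1) (hA : IsSelfAdjoint A) :
    cfc f (U * A * star U) = U * cfc f A * star U := by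
  have h := StarAlgHomClass.map_cfc (conjHom U h1 h2) f A hf.continuousOn
    (conjHom_continuous U h1 h2) hA (hA.conjugate U)
  exact h.symm

/-- `Matrix.diagonal` as a star algebra homomorphism. -/
noncomputable def diagHom : (k → ℂ) →⋆ₐ[ℂ] Matrix k k ℂ where
  toFun := diagonal
  map_one' := diagonal_one
  map_mul' x y := (diagonal_mul_diagonal x y).symm
  map_zero' := diagonal_zero
  map_add' x y := (diagonal_add x y).symm
  commutes' r := by
    rw [Matrix.algebraMap_eq_diagonal]
  map_star' x := by
    rw [star_eq_conjTranspose, diagonal_conjTranspose]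

/-- Evaluation at `i` as a star algebra homomorphism. -/
def evalHom (i : k) : (k → ℂ) →⋆ₐ[ℂ] ℂ :=
  { Pi.evalAlgHom ℂ (fun _ => ℂ) i with map_star' := fun _ => rfl }

lemma isSelfAdjoint_ofReal_pi (d : k → ℝ) :
    IsSelfAdjoint (fun i => (d i : ℂ)) := by
  rw [_root_.IsSelfAdjoint]
  funext i
  simp [Pi.star_def, Complex.conj_ofReal]

noncomputable instance piCFC : ContinuousFunctionalCalculus ℝ (k → ℂ) IsSelfAdjoint :=
  IsSelfAdjoint.instContinuousFunctionalCalculus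

lemma cfc_diagonal (f : ℝ → ℝ) (hf : Continuous f) (d : k → ℝ) :
    cfc f (diagonal (fun i => (d i : ℂ))) = diagonal (fun i => (f (d i) : ℂ)) := by
  have hsa : IsSelfAdjoint (fun i => (d i : ℂ)) := isSelfAdjoint_ofReal_pi d
  have hsaD : IsSelfAdjoint (diagonal (fun i => (d i : ℂ))) := by
    have h : (diagonal (fun i => (d i : ℂ)))ᴴ = diagonal (fun i => (d i : ℂ)) := by
      rw [diagonal_conjTranspose]; exact congrArg diagonal hsa
    exact h
  have h1 : cfc f (fun i => (d i : ℂ)) = fun i => (f (d i) : ℂ) := by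
    funext i
    have hsai : IsSelfAdjoint ((d i : ℂ)) := by
      rw [_root_.IsSelfAdjoint]
      simp [Complex.conj_ofReal]
    have h := StarAlgHomClass.map_cfc (evalHom (k := k) i) f (fun j => (d j : ℂ))
      hf.continuousOn (continuous_apply i) hsa hsai
    have h2 : cfc f ((d i : ℂ)) = ((f (d i) : ℝ) : ℂ) := by
      have : ((d i : ℝ) : ℂ) = algebraMap ℝ ℂ (d i) := rfl
      rw [this, cfc_algebraMap]
      rfl
    calc cfc f (fun j => (d j : ℂ)) i = evalHom (k := k) i (cfc f (fun j => (d j : ℂ))) := rfl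
      _ = cfc f ((d i : ℂ)) := h
      _ = ((f (d i) : ℝ) : ℂ) := h2
  have h := StarAlgHomClass.map_cfc (diagHom (k := k)) f (fun j => (d j : ℂ))
    hf.continuousOn (continuous_id.matrix_diagonal) hsa hsaD
  calc cfc f (diagonal (fun i => (d i : ℂ)))
      = diagHom (k := k) (cfc f (fun j => (d j : ℂ))) := h.symm
    _ = diagonal (fun i => (f (d i) : ℂ)) := by rw [h1]; rfl

lemma isSelfAdjoint_diagonal_ofReal (d : k → ℝ) :
    IsSelfAdjoint (diagonal (fun i => (d i : ℂ))) := by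
  have h : (diagonal (fun i => (d i : ℂ)))ᴴ = diagonal (fun i => (d i : ℂ)) := by
    rw [diagonal_conjTranspose]; exact congrArg diagonal (isSelfAdjoint_ofReal_pi d)
  exact h


lemma matRpow_unitary_conj_diagonal (U : Matrix k k ℂ) (h1 : star U * U = 1)
    (h2 : U * star U = 1) (d : k → ℝ) (r : ℝ) (hr : 0 ≤ r) :
    matRpow (U * diagonal (fun i => (d i : ℂ)) * star U) r
      = U * diagonal (fun i => ((d i ^ r : ℝ) : ℂ)) * star U := by
  have hf : Continuous fun x : ℝ => x ^ r := Real.continuous_rpow_const hr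
  rw [matRpow, cfc_unitary_conj _ hf U _ h1 h2 (isSelfAdjoint_diagonal_ofReal d),
    cfc_diagonal _ hf]

lemma kron_conjTranspose (A : Matrix k k ℂ) (B : Matrix l l ℂ) :
    (A ⊗ₖ B)ᴴ = Aᴴ ⊗ₖ Bᴴ := by
  ext ⟨i, j⟩ ⟨p, q⟩
  simp [conjTranspose_apply, mul_comm]

lemma spectral_decomp {A : Matrix k k ℂ} (hA : A.IsHermitian) :
    A = (hA.eigenvectorUnitary : Matrix k k ℂ)
        * diagonal (fun i => (hA.eigenvalues i : ℂ))
        * star (hA.eigenvectorUnitary : Matrix k k ℂ) := by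
  have h := hA.spectral_theorem
  rw [Unitary.conjStarAlgAut_apply] at h
  exact h

lemma matRpow_of_posSemidef {A : Matrix k k ℂ} (hA : A.PosSemidef) (r : ℝ) (hr : 0 ≤ r) :
    matRpow A r = (hA.1.eigenvectorUnitary : Matrix k k ℂ)
        * diagonal (fun i => ((hA.1.eigenvalues i ^ r : ℝ) : ℂ))
        * star (hA.1.eigenvectorUnitary : Matrix k k ℂ) := by
  conv_lhs => rw [spectral_decomp hA.1]
  exact matRpow_unitary_conj_diagonal _ (hA.1.eigenvectorUnitary).prop.1
    (hA.1.eigenvectorUnitary).prop.2 _ r hr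

lemma matRpow_posSemidef {A : Matrix k k ℂ} (hA : A.PosSemidef) (r : ℝ) (hr : 0 ≤ r) :
    (matRpow A r).PosSemidef := by
  rw [matRpow_of_posSemidef hA r hr]
  have hd : (diagonal (fun i => ((hA.1.eigenvalues i ^ r : ℝ) : ℂ))).PosSemidef := by
    refine posSemidef_diagonal_iff.mpr fun i => ?_
    exact_mod_cast Complex.zero_le_real.mpr (Real.rpow_nonneg (hA.eigenvalues_nonneg i) r)
  simpa [star_eq_conjTranspose] using
    hd.mul_mul_conjTranspose_same (hA.1.eigenvectorUnitary : Matrix k k ℂ)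

lemma matRpow_kron {A : Matrix k k ℂ} {B : Matrix l l ℂ}
    (hA : A.PosSemidef) (hB : B.PosSemidef) (r : ℝ) (hr : 0 ≤ r) :
    matRpow (A ⊗ₖ B) r = matRpow A r ⊗ₖ matRpow B r := by
  set U₁ : Matrix k k ℂ := (hA.1.eigenvectorUnitary : Matrix k k ℂ) with hU₁def
  set U₂ : Matrix l l ℂ := (hB.1.eigenvectorUnitary : Matrix l l ℂ) with hU₂def
  set c := hA.1.eigenvalues
  set d := hB.1.eigenvalues
  have h1₁ : star U₁ * U₁ = 1 := (hA.1.eigenvectorUnitary).prop.1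
  have h2₁ : U₁ * star U₁ = 1 := (hA.1.eigenvectorUnitary).prop.2
  have h1₂ : star U₂ * U₂ = 1 := (hB.1.eigenvectorUnitary).prop.1
  have h2₂ : U₂ * star U₂ = 1 := (hB.1.eigenvectorUnitary).prop.2
  set W : Matrix (k × l) (k × l) ℂ := U₁ ⊗ₖ U₂ with hWdef
  have hstarW : star W = star U₁ ⊗ₖ star U₂ := by
    rw [star_eq_conjTranspose, star_eq_conjTranspose, star_eq_conjTranspose, hWdef,
      kron_conjTranspose]
  have h1W : star W * W = 1 := by
    rw [hstarW, hWdef, ← mul_kronecker_mul, h1₁, h1₂, one_kronecker_one]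
  have h2W : W * star W = 1 := by
    rw [hstarW, hWdef, ← mul_kronecker_mul, h2₁, h2₂, one_kronecker_one]
  have hdec : A ⊗ₖ B = W * diagonal (fun p : k × l => ((c p.1 * d p.2 : ℝ) : ℂ)) * star W := by
    conv_lhs => rw [spectral_decomp hA.1, spectral_decomp hB.1]
    rw [mul_kronecker_mul, mul_kronecker_mul, diagonal_kronecker_diagonal, hstarW]
    congr 2
    · funext p
      push_cast
      ring
  rw [hdec, matRpow_unitary_conj_diagonal W h1W h2W _ r hr,
    matRpow_of_posSemidef hA r hr, matRpow_of_posSemidef hB r hr,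
    mul_kronecker_mul, mul_kronecker_mul, diagonal_kronecker_diagonal, hstarW]
  have heq : (fun p : k × l => (((c p.1 * d p.2) ^ r : ℝ) : ℂ))
      = fun p : k × l => ((c p.1 ^ r : ℝ) : ℂ) * ((d p.2 ^ r : ℝ) : ℂ) := by
    funext p
    rw [Real.mul_rpow (hA.eigenvalues_nonneg p.1) (hB.eigenvalues_nonneg p.2)]
    push_cast
    ring
  rw [heq]

end RenyiAux

/-- Multiplicativity of the α-z-Rényi quantity under Kronecker products, for
positive semidefinite matrices and `0 < α < 1`, `z > 0`. -/
theorem renyi_az_multiplicative_of_lt_one {n m : ℕ}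
    (ρ₁ σ₁ : Matrix (Fin n) (Fin n) ℂ) (ρ₂ σ₂ : Matrix (Fin m) (Fin m) ℂ)
    (hρ₁ : ρ₁.PosSemidef) (hσ₁ : σ₁.PosSemidef) (hρ₂ : ρ₂.PosSemidef) (hσ₂ : σ₂.PosSemidef)
    (α z : ℝ) (hα₀ : 0 < α) (hα₁ : α < 1) (hz : 0 < z) :
    (matRpow (matRpow (σ₁ ⊗ₖ σ₂) ((1 - α) / (2 * z)) * matRpow (ρ₁ ⊗ₖ ρ₂) (α / z)
        * matRpow (σ₁ ⊗ₖ σ₂) ((1 - α) / (2 * z))) z).trace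
      = (matRpow (matRpow σ₁ ((1 - α) / (2 * z)) * matRpow ρ₁ (α / z)
            * matRpow σ₁ ((1 - α) / (2 * z))) z).trace
        * (matRpow (matRpow σ₂ ((1 - α) / (2 * z)) * matRpow ρ₂ (α / z)
            * matRpow σ₂ ((1 - α) / (2 * z))) z).trace := by
  have hr1 : 0 ≤ (1 - α) / (2 * z) := div_nonneg (by linarith) (by linarith)
  have hr2 : 0 ≤ α / z := div_nonneg hα₀.le hz.le
  have hX₁ : (matRpow σ₁ ((1 - α) / (2 * z)) * matRpow ρ₁ (α / z)
      * matRpow σ₁ ((1 - α) / (2 * z))).PosSemidef := by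
    have hS := RenyiAux.matRpow_posSemidef hσ₁ _ hr1
    have hR := RenyiAux.matRpow_posSemidef hρ₁ _ hr2
    have h := hR.mul_mul_conjTranspose_same (matRpow σ₁ ((1 - α) / (2 * z)))
    rwa [hS.1.eq] at h
  have hX₂ : (matRpow σ₂ ((1 - α) / (2 * z)) * matRpow ρ₂ (α / z)
      * matRpow σ₂ ((1 - α) / (2 * z))).PosSemidef := by
    have hS := RenyiAux.matRpow_posSemidef hσ₂ _ hr1
    have hR := RenyiAux.matRpow_posSemidef hρ₂ _ hr2
    have h := hR.mul_mul_conjTranspose_same (matRpow σ₂ ((1 - α) / (2 * z)))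
    rwa [hS.1.eq] at h
  rw [RenyiAux.matRpow_kron hσ₁ hσ₂ _ hr1, RenyiAux.matRpow_kron hρ₁ hρ₂ _ hr2,
    ← mul_kronecker_mul, ← mul_kronecker_mul,
    RenyiAux.matRpow_kron hX₁ hX₂ z hz.le, trace_kronecker]
end

section
/- Let α > 1 and z > 0 be real numbers. Let σ₁, ρ₁ be n×n and σ₂, ρ₂ be m×m complex positive semidefinite matrices, and suppose x₁, x₂ are matrices satisfying ρ_i^{α/z} = σ_i^{(α−1)/(2z)} · x_i · σ_i^{(α−1)/(2z)} for i = 1, 2. Then (ρ₁ ⊗ₖ ρ₂)^{α/z} = (σ₁ ⊗ₖ σ₂)^{(α−1)/(2z)} · (x₁ ⊗ₖ x₂) · (σ₁ ⊗ₖ σ₂)^{(α−1)/(2z)}, and trace(|x₁ ⊗ₖ x₂|^z) = trace(|x₁|^z) · trace(|x₂|^z). -/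
open Matrix Kronecker ComplexOrder

section Aux

variable {k : Type*} [Fintype k] [DecidableEq k]

lemma kron_conjTranspose {n m : Type*} [Fintype n] [Fintype m]
    (A : Matrix n n ℂ) (B : Matrix m m ℂ) :
    (A ⊗ₖ B)ᴴ = Aᴴ ⊗ₖ Bᴴ := by
  ext i j
  simp [conjTranspose_apply, kroneckerMap_apply, star_mul']

lemma cfc_unitary_conj (u : unitary (Matrix k k ℂ)) (v : k → ℝ) (f : ℝ → ℝ) :
    cfc f ((u : Matrix k k ℂ) * diagonal (RCLike.ofReal ∘ v) * (star u : Matrix k k ℂ))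
      = (u : Matrix k k ℂ) * diagonal (RCLike.ofReal ∘ f ∘ v)
        * (star u : Matrix k k ℂ) := by
  set M : Matrix k k ℂ :=
    (u : Matrix k k ℂ) * diagonal (RCLike.ofReal ∘ v) * (star u : Matrix k k ℂ) with hMdef
  have hd : _root_.IsSelfAdjoint (diagonal (RCLike.ofReal ∘ v) : Matrix k k ℂ) := by
    have hst : star (RCLike.ofReal ∘ v : k → ℂ) = RCLike.ofReal ∘ v := by
      funext i
      simp [Pi.star_apply, Function.comp_apply, RCLike.star_def, RCLike.conj_ofReal]
    rw [isSelfAdjoint_iff, star_eq_conjTranspose, diagonal_conjTranspose, hst]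
  have hM : _root_.IsSelfAdjoint M := by
    rw [hMdef]
    simpa [mul_assoc] using hd.conjugate (u : Matrix k k ℂ)
  have hspec : spectrum ℝ M = Set.range v := by
    rw [hMdef, Unitary.spectrum_star_right_conjugate]
    ext x
    rw [← spectrum.algebraMap_mem_iff ℂ, spectrum_diagonal, RCLike.algebraMap_eq_ofReal]
    constructor
    · rintro ⟨i, hi⟩
      exact ⟨i, by simpa using hi⟩
    · rintro ⟨i, rfl⟩
      exact ⟨i, rfl⟩
  have hw : ∀ i, v i ∈ spectrum ℝ M := fun i => hspec ▸ Set.mem_range_self i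
  let w : k → spectrum ℝ M := fun i => ⟨v i, hw i⟩
  let φ : C(spectrum ℝ M, ℝ) →⋆ₐ[ℝ] Matrix k k ℂ :=
  { toFun := fun g => (u : Matrix k k ℂ) * diagonal (RCLike.ofReal ∘ g ∘ w)
      * (star u : Matrix k k ℂ)
    map_one' := by simp [Pi.one_def (M := fun _ : k ↦ ℂ)]
    map_mul' := fun f g => by
      have h : ∀ {a b c d e f : Matrix k k ℂ},
          (a * b * c) * (d * e * f) = a * (b * (c * d) * e) * f := by
        intros; simp only [mul_assoc]
      simp only [h, ContinuousMap.coe_mul, Unitary.coe_star_mul_self, mul_one,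
        diagonal_mul_diagonal, Function.comp_apply]
      congr! with i
      simp
    map_zero' := by simp [Pi.zero_def (M := fun _ : k ↦ ℂ)]
    map_add' := fun f g => by
      simp only [ContinuousMap.coe_add, ← add_mul, ← mul_add, diagonal_add,
        Function.comp_apply]
      congr! with i
      simp
    commutes' := fun r => by
      simp only [Function.comp_def, algebraMap_apply, smul_eq_mul, mul_one]
      rw [← mul_one (algebraMap _ _ _), ← Unitary.coe_mul_star_self u,
        ← Algebra.left_comm, mul_assoc]
      congr!
    map_star' := fun f => by
      simp only [star_trivial, StarMul.star_mul, star_star,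
        star_eq_conjTranspose (diagonal _), diagonal_conjTranspose, mul_assoc]
      congr!
      ext
      simp }
  have h1 : Continuous φ := by
    have hD : Continuous fun g : C(spectrum ℝ M, ℝ) =>
        (diagonal (RCLike.ofReal ∘ g ∘ w) : Matrix k k ℂ) := by
      apply continuous_matrix
      intro i j
      by_cases hij : i = j
      · subst hij
        simp only [diagonal_apply_eq, Function.comp_apply]
        exact RCLike.continuous_ofReal.comp (continuous_eval_const (w i))
      · simp only [diagonal_apply_ne _ hij]
        exact continuous_const
    exact (continuous_const.mul hD).mul continuous_const
  have h2 : φ (ContinuousMap.restrict (spectrum ℝ M) (ContinuousMap.id ℝ)) = M := rfl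
  have key := cfcHom_eq_of_continuous_of_map_id hM φ h1 h2
  rw [cfc_apply f M hM (by rw [continuousOn_iff_continuous_restrict]; fun_prop), key]
  rfl

lemma matRpow_eq_psd {M : Matrix k k ℂ} (hM : M.PosSemidef) (r : ℝ) :
    matRpow M r = (hM.1.eigenvectorUnitary : Matrix k k ℂ)
      * diagonal (RCLike.ofReal ∘ fun i => (hM.1.eigenvalues i) ^ r)
      * (star (hM.1.eigenvectorUnitary : Matrix k k ℂ)) := by
  unfold matRpow
  conv_lhs => rw [hM.1.spectral_theorem]
  exact cfc_unitary_conj hM.1.eigenvectorUnitary hM.1.eigenvalues _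

lemma matRpow_posSemidef {M : Matrix k k ℂ} (hM : M.PosSemidef) (r : ℝ) :
    (matRpow M r).PosSemidef := by
  rw [matRpow_eq_psd hM r, star_eq_conjTranspose (hM.1.eigenvectorUnitary : Matrix k k ℂ)]
  have hD : (diagonal (RCLike.ofReal ∘ fun i => (hM.1.eigenvalues i) ^ r) :
      Matrix k k ℂ).PosSemidef := by
    rw [posSemidef_diagonal_iff]
    intro i
    simp only [Function.comp_apply]
    exact RCLike.ofReal_nonneg.mpr (Real.rpow_nonneg (hM.eigenvalues_nonneg i) r)
  exact hD.mul_mul_conjTranspose_same (hM.1.eigenvectorUnitary : Matrix k k ℂ)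

lemma matAbs_posSemidef (A : Matrix k k ℂ) : (matAbs A).PosSemidef :=
  matRpow_posSemidef (posSemidef_conjTranspose_mul_self A) _

lemma matRpow_kron {n' m' : Type*} [Fintype n'] [DecidableEq n'] [Fintype m'] [DecidableEq m']
    {A : Matrix n' n' ℂ} {B : Matrix m' m' ℂ} (hA : A.PosSemidef) (hB : B.PosSemidef)
    (r : ℝ) :
    matRpow (A ⊗ₖ B) r = matRpow A r ⊗ₖ matRpow B r := by
  set U : Matrix n' n' ℂ := (hA.1.eigenvectorUnitary : Matrix n' n' ℂ) with hU
  set V : Matrix m' m' ℂ := (hB.1.eigenvectorUnitary : Matrix m' m' ℂ) with hV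
  have hU1 : star U * U = 1 := Unitary.star_mul_self_of_mem hA.1.eigenvectorUnitary.2
  have hU2 : U * star U = 1 := Unitary.mul_star_self_of_mem hA.1.eigenvectorUnitary.2
  have hV1 : star V * V = 1 := Unitary.star_mul_self_of_mem hB.1.eigenvectorUnitary.2
  have hV2 : V * star V = 1 := Unitary.mul_star_self_of_mem hB.1.eigenvectorUnitary.2
  have hUV : (U ⊗ₖ V) ∈ unitary (Matrix (n' × m') (n' × m') ℂ) := by
    have hstar : star (U ⊗ₖ V) = star U ⊗ₖ star V := by
      simp only [star_eq_conjTranspose]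
      exact kron_conjTranspose U V
    constructor
    · rw [hstar, ← mul_kronecker_mul, hU1, hV1, one_kronecker_one]
    · rw [hstar, ← mul_kronecker_mul, hU2, hV2, one_kronecker_one]
  set u : unitary (Matrix (n' × m') (n' × m') ℂ) := ⟨U ⊗ₖ V, hUV⟩ with hu
  have hstar : (star u : Matrix (n' × m') (n' × m') ℂ) = star U ⊗ₖ star V := by
    simp only [hu, Unitary.coe_star, star_eq_conjTranspose]
    exact kron_conjTranspose U V
  have hdecomp : A ⊗ₖ B = (u : Matrix (n' × m') (n' × m') ℂ)
      * diagonal (RCLike.ofReal ∘ fun p : n' × m' =>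
          hA.1.eigenvalues p.1 * hB.1.eigenvalues p.2)
      * (star u : Matrix (n' × m') (n' × m') ℂ) := by
    have hdiag0 : (diagonal (fun p : n' × m' => (RCLike.ofReal ∘ hA.1.eigenvalues) p.1
        * (RCLike.ofReal ∘ hB.1.eigenvalues) p.2) : Matrix (n' × m') (n' × m') ℂ)
        = diagonal (RCLike.ofReal ∘ fun p : n' × m' =>
            hA.1.eigenvalues p.1 * hB.1.eigenvalues p.2) :=
      congrArg diagonal (funext fun p => by simp)
    rw [hstar]
    conv_lhs => rw [hA.1.spectral_theorem, hB.1.spectral_theorem, Unitary.conjStarAlgAut_apply,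
      Unitary.conjStarAlgAut_apply]
    rw [mul_kronecker_mul, mul_kronecker_mul, diagonal_kronecker_diagonal, hdiag0]
  have habs : matRpow (A ⊗ₖ B) r = (u : Matrix (n' × m') (n' × m') ℂ)
      * diagonal (RCLike.ofReal ∘ (fun x : ℝ => x ^ r) ∘ fun p : n' × m' =>
          hA.1.eigenvalues p.1 * hB.1.eigenvalues p.2)
      * (star u : Matrix (n' × m') (n' × m') ℂ) := by
    unfold matRpow
    conv_lhs => rw [hdecomp]
    exact cfc_unitary_conj u _ _
  have hdiag : (diagonal (RCLike.ofReal ∘ (fun x : ℝ => x ^ r) ∘ fun p : n' × m' =>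
        hA.1.eigenvalues p.1 * hB.1.eigenvalues p.2) : Matrix (n' × m') (n' × m') ℂ)
      = diagonal (fun p : n' × m' =>
          (RCLike.ofReal ∘ fun i => hA.1.eigenvalues i ^ r) p.1
          * (RCLike.ofReal ∘ fun i => hB.1.eigenvalues i ^ r) p.2) := by
    refine congrArg diagonal (funext fun p => ?_)
    simp only [Function.comp_apply]
    rw [Real.mul_rpow (hA.eigenvalues_nonneg p.1) (hB.eigenvalues_nonneg p.2)]
    push_cast
    ring
  rw [habs, hdiag, ← diagonal_kronecker_diagonal, matRpow_eq_psd hA r, matRpow_eq_psd hB r,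
    mul_kronecker_mul, mul_kronecker_mul, ← hstar]

end Aux

/-- The α > 1 case of multiplicativity of the α-z-Rényi quantity: if `xᵢ` witnesses
identity (♠) for the pair `(ρᵢ, σᵢ)`, then `x₁ ⊗ₖ x₂` witnesses (♠) for the Kronecker
products, and `trace(|x₁ ⊗ₖ x₂|^z) = trace(|x₁|^z) · trace(|x₂|^z)`. -/
theorem renyi_az_multiplicative_of_gt_one {n m : ℕ}
    (σ₁ ρ₁ x₁ : Matrix (Fin n) (Fin n) ℂ) (σ₂ ρ₂ x₂ : Matrix (Fin m) (Fin m) ℂ)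
    (hσ₁ : σ₁.PosSemidef) (hρ₁ : ρ₁.PosSemidef) (hσ₂ : σ₂.PosSemidef) (hρ₂ : ρ₂.PosSemidef)
    (α z : ℝ) (hα : 1 < α) (hz : 0 < z)
    (hx₁ : matRpow ρ₁ (α / z)
      = matRpow σ₁ ((α - 1) / (2 * z)) * x₁ * matRpow σ₁ ((α - 1) / (2 * z)))
    (hx₂ : matRpow ρ₂ (α / z)
      = matRpow σ₂ ((α - 1) / (2 * z)) * x₂ * matRpow σ₂ ((α - 1) / (2 * z))) :
    matRpow (ρ₁ ⊗ₖ ρ₂) (α / z)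
      = matRpow (σ₁ ⊗ₖ σ₂) ((α - 1) / (2 * z)) * (x₁ ⊗ₖ x₂)
        * matRpow (σ₁ ⊗ₖ σ₂) ((α - 1) / (2 * z)) ∧
    (matRpow (matAbs (x₁ ⊗ₖ x₂)) z).trace
      = (matRpow (matAbs x₁) z).trace * (matRpow (matAbs x₂) z).trace := by
  constructor
  · rw [matRpow_kron hρ₁ hρ₂, matRpow_kron hσ₁ hσ₂, hx₁, hx₂,
      mul_kronecker_mul, mul_kronecker_mul]
  · have habs : matAbs (x₁ ⊗ₖ x₂) = matAbs x₁ ⊗ₖ matAbs x₂ := by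
      unfold matAbs
      rw [kron_conjTranspose, ← mul_kronecker_mul]
      exact matRpow_kron (posSemidef_conjTranspose_mul_self x₁)
        (posSemidef_conjTranspose_mul_self x₂) _
    rw [habs, matRpow_kron (matAbs_posSemidef x₁) (matAbs_posSemidef x₂), trace_kronecker]
end
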